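/- arXiv:0909.2724 — 7 statements merged into one kernel-verified Lean document; each statement's English description precedes it below -/
import Mathlib

section
/- Let R be a factorial integral domain and P, Q ∈ R[X] primitive polynomials of degrees m and n respectively. Then the Sylvester map R[X]_{<n} ⊕ R[X]_{<m} → R[X]_{<m+n} sending (r, s) to rP + sQ is injective if and only if P and Q are coprime (i.e., have no nonconstant common divisor). -/
open Polynomial

/-- Let `R` be a factorial integral domain and `P, Q ∈ R[X]` primitive
polynomials of degrees `m` and `n`.  The Sylvester map
`R[X]_{<n} ⊕ R[X]_{<m} → R[X]_{<m+n}`, `(r, s) ↦ rP + sQ`, is injective if and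
only if `P` and `Q` are coprime, i.e. have no nonconstant common divisor. -/
theorem sylvester_injective_iff_coprime (R : Type) [CommRing R] [IsDomain R]
    [UniqueFactorizationMonoid R] (P Q : R[X]) (hP : P.IsPrimitive)
    (hQ : Q.IsPrimitive) (m n : ℕ) (hm : P.natDegree = m) (hn : Q.natDegree = n) :
    Function.Injective
        (fun rs : Polynomial.degreeLT R n × Polynomial.degreeLT R m =>
          (rs.1 : R[X]) * P + (rs.2 : R[X]) * Q) ↔
      ¬ ∃ d : R[X], 0 < d.degree ∧ d ∣ P ∧ d ∣ Q := by
  have hP0 : P ≠ 0 := fun h => by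
    have := hP 0 (by simp [h])
    simpa using this
  have hQ0 : Q ≠ 0 := fun h => by
    have := hQ 0 (by simp [h])
    simpa using this
  constructor
  · rintro hinj ⟨d, hd, ⟨p, hp⟩, ⟨q, hq⟩⟩
    have hd0 : d ≠ 0 := fun h => by simp [h] at hd
    have hq0 : q ≠ 0 := fun h => hQ0 (by simp [hq, h])
    have hp0 : p ≠ 0 := fun h => hP0 (by simp [hp, h])
    have hdn : 0 < d.natDegree := natDegree_pos_iff_degree_pos.mpr hd
    have hqmem : q ∈ degreeLT R n := by
      rw [mem_degreeLT, ← hn, hq]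
      calc q.degree ≤ (q.natDegree : WithBot ℕ) := degree_le_natDegree
        _ < ((d * q).natDegree : WithBot ℕ) := by
            exact_mod_cast (by rw [natDegree_mul hd0 hq0]; omega :
              q.natDegree < (d * q).natDegree)
    have hpmem : -p ∈ degreeLT R m := by
      rw [mem_degreeLT, ← hm, hp, degree_neg]
      calc p.degree ≤ (p.natDegree : WithBot ℕ) := degree_le_natDegree
        _ < ((d * p).natDegree : WithBot ℕ) := by
            exact_mod_cast (by rw [natDegree_mul hd0 hp0]; omega :
              p.natDegree < (d * p).natDegree)
    have := hinj (a₁ := (⟨q, hqmem⟩, ⟨-p, hpmem⟩)) (a₂ := (0, 0)) (by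
      simp only [ZeroMemClass.coe_zero, zero_mul, add_zero, zero_add]
      rw [hp, hq]; ring)
    have : q = 0 := congrArg (fun x => (x.1 : R[X])) this
    exact hq0 this
  · intro hcop
    have hrel : IsRelPrime P Q := by
      intro d hdP hdQ
      have hdle : d.degree ≤ 0 := le_of_not_gt (fun h => hcop ⟨d, h, hdP, hdQ⟩)
      obtain ⟨c, rfl⟩ : ∃ c, d = C c := ⟨d.coeff 0, (eq_C_of_degree_le_zero hdle)⟩
      exact (isUnit_C).mpr (hP c hdP)
    intro a b hab
    set r : R[X] := (a.1 : R[X]) - (b.1 : R[X]) with hr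
    set s : R[X] := (a.2 : R[X]) - (b.2 : R[X]) with hs
    have hrd : r.degree < n := by
      have h1 := mem_degreeLT.mp (a.1).2
      have h2 := mem_degreeLT.mp (b.1).2
      exact lt_of_le_of_lt (degree_sub_le _ _) (max_lt h1 h2)
    have hsd : s.degree < m := by
      have h1 := mem_degreeLT.mp (a.2).2
      have h2 := mem_degreeLT.mp (b.2).2
      exact lt_of_le_of_lt (degree_sub_le _ _) (max_lt h1 h2)
    have hab' : (a.1 : R[X]) * P + (a.2 : R[X]) * Q
        = (b.1 : R[X]) * P + (b.2 : R[X]) * Q := hab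
    have key : r * P + s * Q = 0 := by
      simp only [hr, hs]
      linear_combination hab'
    have hPm : P.degree = (m : WithBot ℕ) := by rw [← hm, degree_eq_natDegree hP0]
    have hPs : P ∣ s * Q := ⟨-r, by linear_combination key⟩
    have hPs' : P ∣ s := hrel.dvd_of_dvd_mul_right hPs
    have hs0 : s = 0 := eq_zero_of_dvd_of_degree_lt hPs' (by rwa [hPm])
    have hr0 : r = 0 := by
      have : r * P = 0 := by linear_combination key - hs0 * Q
      rcases mul_eq_zero.mp this with h | h
      · exact h
      · exact absurd h hP0
    have h1 : a.1 = b.1 := Subtype.ext (sub_eq_zero.mp hr0)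
    have h2 : a.2 = b.2 := Subtype.ext (sub_eq_zero.mp hs0)
    exact Prod.ext h1 h2
end

section
/- Let P, Q ∈ ℤ[X] be primitive coprime polynomials and suppose the Sylvester map is injective. Then any non-zero polynomial of smallest degree in the image of the Sylvester map is a constant polynomial. -/
open Polynomial

/-- Let `P, Q ∈ ℤ[X]` be primitive coprime polynomials such that the Sylvester
map `(r, s) ↦ rP + sQ` (with `deg r < deg Q`, `deg s < deg P`) is injective.
Then any nonzero polynomial of smallest degree in the image of the Sylvester
map is a constant polynomial. -/
theorem smallest_degree_in_sylvester_image_is_constant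
    (P Q : ℤ[X]) (hP : P.IsPrimitive) (hQ : Q.IsPrimitive)
    (hcop : IsCoprime (P.map (Int.castRingHom ℚ)) (Q.map (Int.castRingHom ℚ)))
    (hinj : Function.Injective
      (fun rs : Polynomial.degreeLT ℤ Q.natDegree × Polynomial.degreeLT ℤ P.natDegree =>
        (rs.1 : ℤ[X]) * P + (rs.2 : ℤ[X]) * Q))
    (F : ℤ[X]) (hF : F ≠ 0)
    (hFimg : ∃ r s : ℤ[X], r.degree < Q.degree ∧ s.degree < P.degree ∧
      F = r * P + s * Q)
    (hFmin : ∀ G : ℤ[X], G ≠ 0 →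
      (∃ r s : ℤ[X], r.degree < Q.degree ∧ s.degree < P.degree ∧
        G = r * P + s * Q) → F.degree ≤ G.degree) :
    F.degree = 0 := by
  classical
  have hcastinj : Function.Injective (Int.castRingHom ℚ) := Int.cast_injective
  have hP0 : P ≠ 0 := by
    rintro rfl; have := hP 2 (dvd_zero _); norm_num [Int.isUnit_iff] at this
  have hQ0 : Q ≠ 0 := by
    rintro rfl; have := hQ 2 (dvd_zero _); norm_num [Int.isUnit_iff] at this
  set φ := Int.castRingHom ℚ with hφ
  set P' := P.map φ with hP'
  set Q' := Q.map φ with hQ'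
  have hP'0 : P' ≠ 0 := (Polynomial.map_ne_zero_iff hcastinj).mpr hP0
  have hQ'0 : Q' ≠ 0 := (Polynomial.map_ne_zero_iff hcastinj).mpr hQ0
  have hdP : P'.degree = P.degree := degree_map_eq_of_injective hcastinj P
  have hdQ : Q'.degree = Q.degree := degree_map_eq_of_injective hcastinj Q
  have h0P : 0 ≤ P'.degree := zero_le_degree_iff.mpr hP'0
  have h0Q : 0 ≤ Q'.degree := zero_le_degree_iff.mpr hQ'0
  by_cases hdeg : Q.degree = 0 ∧ P.degree = 0
  · exfalso
    obtain ⟨r, s, hr, hs, hFeq⟩ := hFimg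
    rw [hdeg.1] at hr
    rw [hdeg.2] at hs
    have hr0 : r = 0 := degree_eq_bot.mp (Nat.WithBot.lt_zero_iff.mp hr)
    have hs0 : s = 0 := degree_eq_bot.mp (Nat.WithBot.lt_zero_iff.mp hs)
    apply hF
    rw [hFeq, hr0, hs0]; ring
  · have hsum : (0 : WithBot ℕ) < P'.degree + Q'.degree := by
      rcases not_and_or.mp hdeg with h | h
      · have h1 : 0 < Q'.degree :=
          lt_of_le_of_ne h0Q (fun heq => h (hdQ ▸ heq.symm))
        calc (0 : WithBot ℕ) < Q'.degree := h1
          _ = 0 + Q'.degree := (zero_add _).symm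
          _ ≤ P'.degree + Q'.degree := add_le_add_left h0P _
      · have h1 : 0 < P'.degree :=
          lt_of_le_of_ne h0P (fun heq => h (hdP ▸ heq.symm))
        calc (0 : WithBot ℕ) < P'.degree := h1
          _ = P'.degree + 0 := (add_zero _).symm
          _ ≤ P'.degree + Q'.degree := add_le_add_right h0Q _
    -- Bezout with degree bounds over ℚ
    obtain ⟨a, b, hab⟩ := hcop
    have hQm : (Q' * C Q'.leadingCoeff⁻¹).Monic := monic_mul_leadingCoeff_inv hQ'0
    set a' : ℚ[X] := a %ₘ (Q' * C Q'.leadingCoeff⁻¹) with ha'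
    set q : ℚ[X] := a /ₘ (Q' * C Q'.leadingCoeff⁻¹) with hq
    set b' : ℚ[X] := b + C Q'.leadingCoeff⁻¹ * q * P' with hb'
    have hmoddiv := modByMonic_add_div a (Q' * C Q'.leadingCoeff⁻¹)
    rw [← ha', ← hq] at hmoddiv
    have hkey : a' * P' + b' * Q' = 1 := by
      rw [hb']
      linear_combination hab + P' * hmoddiv
    have hda' : a'.degree < Q'.degree := by
      rw [ha']
      exact (degree_modByMonic_lt a hQm).trans_eq (degree_mul_leadingCoeff_inv Q' hQ'0)
    have hdb' : b'.degree < P'.degree := by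
      by_cases hb0 : b' = 0
      · rw [hb0, degree_zero]
        exact bot_lt_iff_ne_bot.mpr (fun hbot => hP'0 (degree_eq_bot.mp hbot))
      · have h2 : b'.degree + Q'.degree = (1 - a' * P').degree := by
          rw [← degree_mul]
          congr 1
          linear_combination hkey
        have h3 : (1 - a' * P').degree < P'.degree + Q'.degree := by
          apply lt_of_le_of_lt (degree_sub_le _ _)
          rw [max_lt_iff]
          constructor
          · simpa using hsum
          · rw [degree_mul]
            calc a'.degree + P'.degree < Q'.degree + P'.degree :=
                WithBot.add_lt_add_right (fun hbot => hP'0 (degree_eq_bot.mp hbot)) hda'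
              _ = P'.degree + Q'.degree := add_comm _ _
        have h4 : b'.degree + Q'.degree < P'.degree + Q'.degree := h2 ▸ h3
        exact (WithBot.add_lt_add_iff_right (fun hbot => hQ'0 (degree_eq_bot.mp hbot))).mp h4
    obtain ⟨⟨da, hdamem⟩, hra⟩ :=
      IsLocalization.integerNormalization_map_to_map (nonZeroDivisors ℤ) a'
    obtain ⟨⟨db, hdbmem⟩, hrb⟩ :=
      IsLocalization.integerNormalization_map_to_map (nonZeroDivisors ℤ) b'
    set ra := IsLocalization.integerNormalization (nonZeroDivisors ℤ) a' with hraDef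
    set rb := IsLocalization.integerNormalization (nonZeroDivisors ℤ) b' with hrbDef
    have hda0 : da ≠ 0 := nonZeroDivisors.ne_zero hdamem
    have hdb0 : db ≠ 0 := nonZeroDivisors.ne_zero hdbmem
    have halg : algebraMap ℤ ℚ = φ := by rw [hφ, algebraMap_int_eq]
    have hra' : ra.map φ = C (da : ℚ) * a' := by
      rw [← halg, hra, show ((⟨da, hdamem⟩ : nonZeroDivisors ℤ) : ℤ) = da from rfl,
        zsmul_eq_mul]
      norm_cast
    have hrb' : rb.map φ = C (db : ℚ) * b' := by
      rw [← halg, hrb, show ((⟨db, hdbmem⟩ : nonZeroDivisors ℤ) : ℤ) = db from rfl,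
        zsmul_eq_mul]
      norm_cast
    have hdra : ra.degree = a'.degree := by
      rw [← degree_map_eq_of_injective hcastinj ra, hra', degree_mul, degree_C (by exact_mod_cast hda0 : (da:ℚ) ≠ 0), zero_add]
    have hdrb : rb.degree = b'.degree := by
      rw [← degree_map_eq_of_injective hcastinj rb, hrb', degree_mul, degree_C (by exact_mod_cast hdb0 : (db:ℚ) ≠ 0), zero_add]
    have hG0 : (C (da * db) : ℤ[X]) ≠ 0 := by
      simpa using ⟨hda0, hdb0⟩
    have hGeq : (C (da * db) : ℤ[X]) = (C db * ra) * P + (C da * rb) * Q := by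
      apply Polynomial.map_injective φ hcastinj
      rw [Polynomial.map_add, Polynomial.map_mul, Polynomial.map_mul,
        Polynomial.map_mul, Polynomial.map_mul, map_C, map_C, map_C, hra', hrb']
      simp only [eq_intCast φ, Int.cast_mul, C_mul]
      linear_combination (-(C (da : ℚ) * C (db : ℚ))) * hkey
    have hdr : (C db * ra).degree < Q.degree := by
      rw [degree_mul, degree_C hdb0, zero_add, hdra, ← hdQ]
      exact hda'
    have hds : (C da * rb).degree < P.degree := by
      rw [degree_mul, degree_C hda0, zero_add, hdrb, ← hdP]
      exact hdb'
    have hle := hFmin (C (da * db)) hG0 ⟨C db * ra, C da * rb, hdr, hds, hGeq⟩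
    have hle0 : F.degree ≤ 0 := hle.trans_eq (degree_C (mul_ne_zero hda0 hdb0))
    exact le_antisymm hle0 (zero_le_degree_iff.mpr hF)
end

section
/- Let P, Q ∈ ℤ[X] be monic coprime polynomials, let c = c(P,Q) be the congruence number, and suppose ℓⁿ exactly divides c. Then for any m > n there exist no algebraic integers α, β in a common finite extension K of ℚ_ℓ with P(α) = 0, Q(β) = 0 and v_ℓ(α - β) > m - 1. -/
open Polynomial

/-- A finite extension `K` of `ℚ_ℓ`, carrying a multiplicative norm
normalized by `‖ℓ‖ = ℓ⁻¹`, so that `v_ℓ(x) > m - 1 ↔ ‖x‖ < ℓ^(1-m)`. -/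
structure PadicExt (ℓ : ℕ) [Fact ℓ.Prime] where
  K : Type
  [nf : NormedField K]
  [alg : Algebra ℚ_[ℓ] K]
  [fin : FiniteDimensional ℚ_[ℓ] K]
  norm_ell : ‖(ℓ : K)‖ = (ℓ : ℝ)⁻¹

attribute [instance] PadicExt.nf PadicExt.alg PadicExt.fin

section Aux

variable {K : Type} [NormedField K]

/-- If the norm of a normed field is bounded by 1 on ℤ and `‖x‖ ≤ 1`, then integer
polynomials evaluate to elements of norm at most 1 at `x`. -/
lemma aux_norm_aeval_le_one [IsUltrametricDist K] (t : Polynomial ℤ) {x : K}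
    (hx : ‖x‖ ≤ 1) : ‖Polynomial.aeval x t‖ ≤ 1 := by
  rw [Polynomial.aeval_eq_sum_range]
  refine IsUltrametricDist.norm_sum_le_of_forall_le_of_nonneg zero_le_one ?_
  intro i _
  rw [zsmul_eq_mul, norm_mul]
  calc ‖((t.coeff i : ℤ) : K)‖ * ‖x ^ i‖ ≤ 1 * 1 := by
        refine mul_le_mul (IsUltrametricDist.norm_intCast_le_one K _) ?_ (norm_nonneg _)
          zero_le_one
        rw [norm_pow]
        exact pow_le_one₀ (norm_nonneg x) hx
    _ = 1 := mul_one 1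

lemma aux_norm_pow_sub_pow [IsUltrametricDist K] {x y : K} (hx : ‖x‖ ≤ 1) (hy : ‖y‖ ≤ 1)
    (i : ℕ) : ‖x ^ i - y ^ i‖ ≤ ‖x - y‖ := by
  induction i with
  | zero => simpa using norm_nonneg _
  | succ i ih =>
    have key : x ^ (i + 1) - y ^ (i + 1) = x * (x ^ i - y ^ i) + (x - y) * y ^ i := by ring
    rw [key]
    refine le_trans (IsUltrametricDist.norm_add_le_max _ _) (max_le ?_ ?_)
    · rw [norm_mul]
      calc ‖x‖ * ‖x ^ i - y ^ i‖ ≤ 1 * ‖x - y‖ :=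
            mul_le_mul hx ih (norm_nonneg _) zero_le_one
        _ = ‖x - y‖ := one_mul _
    · rw [norm_mul]
      calc ‖x - y‖ * ‖y ^ i‖ ≤ ‖x - y‖ * 1 := by
            refine mul_le_mul_of_nonneg_left ?_ (norm_nonneg _)
            rw [norm_pow]
            exact pow_le_one₀ (norm_nonneg y) hy
        _ = ‖x - y‖ := mul_one _

/-- Evaluating an integer polynomial at two nearby integral points gives nearby values. -/
lemma aux_norm_aeval_sub [IsUltrametricDist K] (t : Polynomial ℤ) {x y : K}
    (hx : ‖x‖ ≤ 1) (hy : ‖y‖ ≤ 1) :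
    ‖Polynomial.aeval x t - Polynomial.aeval y t‖ ≤ ‖x - y‖ := by
  rw [Polynomial.aeval_eq_sum_range (p := t) x, Polynomial.aeval_eq_sum_range (p := t) y,
    ← Finset.sum_sub_distrib]
  refine IsUltrametricDist.norm_sum_le_of_forall_le_of_nonneg (norm_nonneg _) ?_
  intro i _
  rw [← smul_sub, zsmul_eq_mul, norm_mul]
  calc ‖((t.coeff i : ℤ) : K)‖ * ‖x ^ i - y ^ i‖ ≤ 1 * ‖x - y‖ :=
        mul_le_mul (IsUltrametricDist.norm_intCast_le_one K _)
          (aux_norm_pow_sub_pow hx hy i) (norm_nonneg _) zero_le_one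
    _ = ‖x - y‖ := one_mul _

end Aux

/-- Let `P, Q ∈ ℤ[X]` be monic coprime polynomials and suppose `ℓⁿ` exactly
divides the congruence number `c = c(P,Q)`.  Then for any `m > n` there are no
algebraic integers `α, β` in a common finite extension `K` of `ℚ_ℓ` with
`P(α) = 0`, `Q(β) = 0` and `v_ℓ(α - β) > m - 1`
(equivalently `‖α - β‖ < ℓ^(1-m)`). -/
theorem no_congruence_beyond_congruence_number (ℓ : ℕ) [Fact ℓ.Prime]
    (P Q : ℤ[X]) (hPm : P.Monic) (hQm : Q.Monic)
    (hcop : IsCoprime (P.map (Int.castRingHom ℚ)) (Q.map (Int.castRingHom ℚ)))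
    (c : ℕ)
    (hc : IsLeast {k : ℕ | 0 < k ∧ ∃ r s : ℤ[X],
      r.degree < Q.degree ∧ s.degree < P.degree ∧
      (Polynomial.C (k : ℤ)) = r * P + s * Q} c)
    (n : ℕ) (hn : ℓ ^ n ∣ c ∧ ¬ ℓ ^ (n + 1) ∣ c) :
    ∀ m : ℕ, n < m →
      ¬ ∃ (E : PadicExt ℓ) (α β : E.K),
        Polynomial.aeval α P = 0 ∧ Polynomial.aeval β Q = 0 ∧
        ‖α‖ ≤ 1 ∧ ‖β‖ ≤ 1 ∧ ‖α - β‖ < (ℓ : ℝ) ^ ((1 : ℤ) - (m : ℤ)) := by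
  intro m hm
  rintro ⟨E, α, β, hPα, hQβ, hα, hβ, hdist⟩
  have hℓprime : ℓ.Prime := Fact.out
  have hℓ1 : (1 : ℝ) < (ℓ : ℝ) := by exact_mod_cast hℓprime.one_lt
  have hℓ0 : (0 : ℝ) < (ℓ : ℝ) := lt_trans one_pos hℓ1
  -- K has characteristic zero, so it is a ℚ-algebra via `Rat.cast`.
  have : CharZero E.K := charZero_of_injective_algebraMap (algebraMap ℚ_[ℓ] E.K).injective
  -- the restriction of the norm to ℚ is a multiplicative ring norm
  set f : MulRingNorm ℚ :=
    { toFun := fun q => ‖(q : E.K)‖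
      map_zero' := by simp
      add_le' := fun a b => by push_cast; exact norm_add_le _ _
      neg' := fun a => by push_cast; exact norm_neg _
      eq_zero_of_map_eq_zero' := fun a h => by
        have : ((a : E.K)) = 0 := norm_eq_zero.mp h
        exact_mod_cast this
      map_one' := by simp
      map_mul' := fun a b => by push_cast; exact norm_mul _ _ } with hf
  have hfℓ : f (ℓ : ℚ) = (ℓ : ℝ)⁻¹ := by
    show ‖(((ℓ : ℕ) : ℚ) : E.K)‖ = (ℓ : ℝ)⁻¹
    rw [Rat.cast_natCast]
    exact E.norm_ell
  -- the norm is bounded by 1 on ℕ (otherwise Ostrowski's lemma contradicts `‖ℓ‖ < 1`)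
  have bdd : ∀ k : ℕ, f (k : ℚ) ≤ 1 := by
    by_contra hb
    push_neg at hb
    have h1 : 1 < f (ℓ : ℚ) := by
      refine Rat.AbsoluteValue.one_lt_of_not_bounded (f := MulRingNorm.mulRingNormEquivAbsoluteValue f) ?_ hℓprime.one_lt
      intro h; obtain ⟨k, hk⟩ := hb; exact absurd (h k) (not_le.mpr hk)
    rw [hfℓ] at h1
    have : (ℓ : ℝ)⁻¹ < 1 := inv_lt_one_of_one_lt₀ hℓ1
    linarith
  have hnat : ∀ k : ℕ, ‖((k : ℕ) : E.K)‖ ≤ 1 := by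
    intro k
    have h2 : ‖(((k : ℕ) : ℚ) : E.K)‖ ≤ 1 := bdd k
    rwa [Rat.cast_natCast] at h2
  haveI : IsUltrametricDist E.K :=
    IsUltrametricDist.isUltrametricDist_of_forall_norm_natCast_le_one hnat
  -- write c = ℓ^n * u with ℓ ∤ u
  obtain ⟨u, hu⟩ := hn.1
  have hℓu : ¬ ℓ ∣ u := by
    intro ⟨v, hv⟩
    exact hn.2 ⟨v, by rw [hu, hv]; ring⟩
  -- ‖u‖ = 1
  have hu1 : ‖((u : ℕ) : E.K)‖ = 1 := by
    refine le_antisymm (hnat u) ?_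
    obtain ⟨a, b, hab⟩ := (Nat.Coprime.isCoprime
      ((Nat.Prime.coprime_iff_not_dvd hℓprime).mpr hℓu).symm : IsCoprime (u : ℤ) (ℓ : ℤ))
    by_contra hlt
    push_neg at hlt
    have h1K : (1 : E.K) = (a : E.K) * ((u : ℕ) : E.K) + (b : E.K) * ((ℓ : ℕ) : E.K) := by
      have := congrArg (fun z : ℤ => (z : E.K)) hab
      push_cast at this
      simpa using this.symm
    have hmax : (1 : ℝ) ≤ max (‖(a : E.K) * ((u : ℕ) : E.K)‖) (‖(b : E.K) * ((ℓ : ℕ) : E.K)‖) := by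
      calc (1 : ℝ) = ‖(1 : E.K)‖ := norm_one.symm
        _ = ‖(a : E.K) * ((u : ℕ) : E.K) + (b : E.K) * ((ℓ : ℕ) : E.K)‖ := by rw [← h1K]
        _ ≤ _ := IsUltrametricDist.norm_add_le_max _ _
    have ha : ‖(a : E.K) * ((u : ℕ) : E.K)‖ < 1 := by
      rw [norm_mul]
      exact lt_of_le_of_lt
        (mul_le_of_le_one_left (norm_nonneg _) (IsUltrametricDist.norm_intCast_le_one E.K a)) hlt
    have hb : ‖(b : E.K) * ((ℓ : ℕ) : E.K)‖ < 1 := by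
      rw [norm_mul, E.norm_ell]
      exact lt_of_le_of_lt
        (mul_le_of_le_one_left (by positivity) (IsUltrametricDist.norm_intCast_le_one E.K b))
        (inv_lt_one_of_one_lt₀ hℓ1)
    exact absurd hmax (not_le.mpr (max_lt ha hb))
  -- ‖c‖ = ℓ^(-n)
  have hcnorm : ‖((c : ℕ) : E.K)‖ = (ℓ : ℝ) ^ (-(n : ℤ)) := by
    have : ((c : ℕ) : E.K) = ((ℓ : ℕ) : E.K) ^ n * ((u : ℕ) : E.K) := by
      rw [hu]; push_cast; ring
    rw [this, norm_mul, norm_pow, E.norm_ell, hu1, mul_one, zpow_neg, zpow_natCast, inv_pow]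
  -- evaluate the Bezout identity at α
  obtain ⟨hcpos, r, s, hrdeg, hsdeg, heq⟩ := hc.1
  have hcK : ((c : ℕ) : E.K) = Polynomial.aeval α s * Polynomial.aeval α Q := by
    have h := congrArg (Polynomial.aeval α) heq
    rw [map_add, map_mul, map_mul, hPα, mul_zero, zero_add, Polynomial.aeval_C] at h
    rw [← h]
    simp [algebraMap_int_eq]
  -- bound ‖c‖ from above
  have hQα : ‖Polynomial.aeval α Q‖ ≤ ‖α - β‖ := by
    have h := aux_norm_aeval_sub Q hα hβ
    rwa [hQβ, sub_zero] at h
  have hub : ‖((c : ℕ) : E.K)‖ ≤ ‖α - β‖ := by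
    rw [hcK, norm_mul]
    exact le_trans (mul_le_of_le_one_left (norm_nonneg _) (aux_norm_aeval_le_one s hα)) hQα
  -- conclude
  have hle : (ℓ : ℝ) ^ ((1 : ℤ) - (m : ℤ)) ≤ (ℓ : ℝ) ^ (-(n : ℤ)) :=
    zpow_le_zpow_right₀ (le_of_lt hℓ1) (by omega)
  rw [hcnorm] at hub
  linarith
end

section
/- Let P, Q ∈ ℤ[X] be primitive coprime monic polynomials. Then the reductions of P and Q modulo ℓ have a non-trivial common divisor in 𝔽_ℓ[X] if and only if ℓ divides the congruence number c(P,Q). -/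
open Polynomial

/-- Let `P, Q ∈ ℤ[X]` be primitive coprime monic polynomials with congruence
number `c(P,Q)` (the smallest positive integer in the image of the Sylvester
map).  Then the reductions of `P` and `Q` modulo `ℓ` have a non-trivial common
divisor in `𝔽_ℓ[X]` if and only if `ℓ` divides `c(P,Q)`. -/
theorem common_divisor_mod_ell_iff_ell_dvd_congruence_number
    (ℓ : ℕ) [Fact ℓ.Prime] (P Q : ℤ[X]) (hPm : P.Monic) (hQm : Q.Monic)
    (hP : P.IsPrimitive) (hQ : Q.IsPrimitive)
    (hcop : IsCoprime (P.map (Int.castRingHom ℚ)) (Q.map (Int.castRingHom ℚ)))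
    (c : ℕ)
    (hc : IsLeast {k : ℕ | 0 < k ∧ ∃ r s : ℤ[X],
      r.degree < Q.degree ∧ s.degree < P.degree ∧
      (Polynomial.C (k : ℤ)) = r * P + s * Q} c) :
    (∃ d : Polynomial (ZMod ℓ), 0 < d.degree ∧
        d ∣ P.map (Int.castRingHom (ZMod ℓ)) ∧
        d ∣ Q.map (Int.castRingHom (ZMod ℓ))) ↔ ℓ ∣ c := by
  obtain ⟨⟨hcpos, r, s, hr, hs, heq⟩, hlb⟩ := hc
  have hℓp : ℓ.Prime := Fact.out
  set f := Int.castRingHom (ZMod ℓ) with hf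
  have hPne : P.map f ≠ 0 := (hPm.map f).ne_zero
  have hQne : Q.map f ≠ 0 := (hQm.map f).ne_zero
  have hmap : C (((c : ℤ) : ZMod ℓ)) = r.map f * P.map f + s.map f * Q.map f := by
    have := congrArg (Polynomial.map f) heq
    simpa [Polynomial.map_add, Polynomial.map_mul] using this
  constructor
  · rintro ⟨d, hd, hdP, hdQ⟩
    by_contra hndvd
    have hc0 : ((c : ℤ) : ZMod ℓ) ≠ 0 := by
      rw [Int.cast_natCast, Ne, ZMod.natCast_eq_zero_iff]
      exact hndvd
    have hdvd : d ∣ C (((c : ℤ) : ZMod ℓ)) := by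
      rw [hmap]
      exact dvd_add (hdP.mul_left _) (hdQ.mul_left _)
    have hle := Polynomial.degree_le_of_dvd hdvd (Polynomial.C_ne_zero.mpr hc0)
    rw [degree_C hc0] at hle
    exact absurd (hd.trans_le hle) (lt_irrefl _)
  · intro hdvd
    by_contra hnod
    push_neg at hnod
    -- P and Q are coprime mod ℓ
    have hcop' : IsCoprime (P.map f) (Q.map f) := by
      rw [← EuclideanDomain.gcd_isUnit_iff]
      set g := EuclideanDomain.gcd (P.map f) (Q.map f) with hg
      have hgP : g ∣ P.map f := EuclideanDomain.gcd_dvd_left _ _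
      have hgQ : g ∣ Q.map f := EuclideanDomain.gcd_dvd_right _ _
      have hgne : g ≠ 0 := fun h0 => hPne (by
        simpa [h0] using hgP)
      have hgdeg : ¬ 0 < g.degree := fun hpos => hnod g hpos hgP hgQ
      rw [Polynomial.isUnit_iff_degree_eq_zero]
      have hbot : g.degree ≠ ⊥ := by simpa [Polynomial.degree_eq_bot] using hgne
      rcases lt_trichotomy g.degree 0 with h | h | h
      · exact absurd (Nat.WithBot.lt_zero_iff.mp h) hbot
      · exact h
      · exact absurd h hgdeg
    obtain ⟨c', rfl⟩ := hdvd
    have hc0 : ((↑(ℓ * c') : ℤ) : ZMod ℓ) = 0 := by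
      push_cast
      simp [ZMod.natCast_self]
    rw [hc0, map_zero] at hmap
    -- r and s vanish mod ℓ
    have hdegr : (r.map f).degree < (Q.map f).degree := by
      rw [hQm.degree_map]
      exact lt_of_le_of_lt (Polynomial.degree_map_le) hr
    have hdegs : (s.map f).degree < (P.map f).degree := by
      rw [hPm.degree_map]
      exact lt_of_le_of_lt (Polynomial.degree_map_le) hs
    have hr0 : r.map f = 0 := by
      by_contra hrne
      have hQr : Q.map f ∣ r.map f :=
        hcop'.symm.dvd_of_dvd_mul_right ⟨-(s.map f), by linear_combination -hmap⟩
      exact absurd (Polynomial.degree_le_of_dvd hQr hrne) (not_le_of_gt hdegr)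
    have hs0 : s.map f = 0 := by
      by_contra hsne
      have hPs : P.map f ∣ s.map f :=
        hcop'.dvd_of_dvd_mul_right ⟨-(r.map f), by linear_combination -hmap⟩
      exact absurd (Polynomial.degree_le_of_dvd hPs hsne) (not_le_of_gt hdegs)
    -- hence ℓ divides all coefficients of r and s
    have hCr : C ((ℓ : ℤ)) ∣ r := by
      rw [Polynomial.C_dvd_iff_dvd_coeff]
      intro i
      have : f (r.coeff i) = 0 := by
        rw [← Polynomial.coeff_map, hr0, Polynomial.coeff_zero]
      rwa [hf, eq_comm, eq_comm (a := (0 : ZMod ℓ)),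
        show (Int.castRingHom (ZMod ℓ)) (r.coeff i) = ((r.coeff i : ℤ) : ZMod ℓ) from rfl,
        ZMod.intCast_zmod_eq_zero_iff_dvd] at this
    have hCs : C ((ℓ : ℤ)) ∣ s := by
      rw [Polynomial.C_dvd_iff_dvd_coeff]
      intro i
      have : f (s.coeff i) = 0 := by
        rw [← Polynomial.coeff_map, hs0, Polynomial.coeff_zero]
      rwa [hf, show (Int.castRingHom (ZMod ℓ)) (s.coeff i) = ((s.coeff i : ℤ) : ZMod ℓ) from rfl,
        ZMod.intCast_zmod_eq_zero_iff_dvd] at this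
    obtain ⟨r', hr'⟩ := hCr
    obtain ⟨s', hs'⟩ := hCs
    have hℓne : (C ((ℓ : ℤ)) : ℤ[X]) ≠ 0 := by
      simp [Polynomial.C_eq_zero, hℓp.ne_zero]
    have key : C ((c' : ℤ)) = r' * P + s' * Q := by
      apply mul_left_cancel₀ hℓne
      rw [← Polynomial.C_mul]
      have : ((ℓ : ℤ)) * (c' : ℤ) = ((ℓ * c' : ℕ) : ℤ) := by push_cast; ring
      rw [this, heq, hr', hs']
      ring
    have hrd' : r'.degree < Q.degree := by
      rcases eq_or_ne r' 0 with h0 | h0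
      · rw [h0, Polynomial.degree_zero]
        exact Ne.bot_lt (by simpa [Polynomial.degree_eq_bot] using hQm.ne_zero)
      · have hrne : r ≠ 0 := by
          rw [hr']
          exact mul_ne_zero hℓne h0
        exact lt_of_le_of_lt (Polynomial.degree_le_of_dvd ⟨C ((ℓ : ℤ)), by rw [hr']; ring⟩ hrne) hr
    have hsd' : s'.degree < P.degree := by
      rcases eq_or_ne s' 0 with h0 | h0
      · rw [h0, Polynomial.degree_zero]
        exact Ne.bot_lt (by simpa [Polynomial.degree_eq_bot] using hPm.ne_zero)
      · have hsne : s ≠ 0 := by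
          rw [hs']
          exact mul_ne_zero hℓne h0
        exact lt_of_le_of_lt (Polynomial.degree_le_of_dvd ⟨C ((ℓ : ℤ)), by rw [hs']; ring⟩ hsne) hs
    have hc'pos : 0 < c' := by
      rcases Nat.eq_zero_or_pos c' with h0 | h0
      · simp [h0] at hcpos
      · exact h0
    have hmem : ℓ * c' ≤ c' := hlb ⟨hc'pos, r', s', hrd', hsd', key⟩
    have h2 : 2 ≤ ℓ := hℓp.two_le
    nlinarith
end

section
/- Suppose P̄ ∈ 𝔽_ℓ[X] is irreducible and Q ∈ ℤ_ℓ[X] is irreducible, with P, Q monic coprime, and write c(P,Q) = rP + sQ with deg s < deg P. Then s̄ and Q̄ are coprime in 𝔽_ℓ[X]. -/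
open Polynomial

section Aux

variable {ℓ : ℕ} [Fact ℓ.Prime]

/-- If a polynomial over `ℤ_ℓ` reduces to zero mod `ℓ`, it is divisible by `C ℓ`. -/
lemma aux_C_dvd_of_map_eq_zero (p : Polynomial ℤ_[ℓ])
    (h : p.map (PadicInt.toZMod (p := ℓ)) = 0) :
    Polynomial.C ((ℓ:ℤ_[ℓ])) ∣ p := by
  rw [Polynomial.C_dvd_iff_dvd_coeff]
  intro n
  have h2 : PadicInt.toZMod (p.coeff n) = 0 := by
    have := congrArg (fun q => Polynomial.coeff q n) h
    simpa using this
  have h3 : p.coeff n ∈ RingHom.ker (PadicInt.toZMod (p := ℓ)) := h2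
  rw [PadicInt.ker_toZMod, PadicInt.maximalIdeal_eq_span_p, Ideal.mem_span_singleton] at h3
  exact h3

lemma aux_toZMod_surjective : Function.Surjective (PadicInt.toZMod (p := ℓ)) := by
  intro z
  refine ⟨((z.val : ℕ) : ℤ_[ℓ]), ?_⟩
  rw [map_natCast, ZMod.natCast_val, ZMod.cast_id]

lemma aux_mem_span_iff (Q : Polynomial ℤ_[ℓ]) (hQm : Q.Monic) (n : ℕ)
    (x : AdjoinRoot Q) :
    x ∈ (Ideal.span {((ℓ : AdjoinRoot Q))}) ^ n ↔
      ∀ i, (ℓ:ℤ_[ℓ])^n ∣ (AdjoinRoot.powerBasis' hQm).basis.repr x i := by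
  have hcast : ∀ y : AdjoinRoot Q, (ℓ : AdjoinRoot Q)^n * y = ((ℓ:ℤ_[ℓ])^n) • y := by
    intro y
    rw [Algebra.smul_def, map_pow]
    norm_num
  rw [Ideal.span_singleton_pow, Ideal.mem_span_singleton]
  set B := (AdjoinRoot.powerBasis' hQm).basis with hB
  constructor
  · rintro ⟨y, rfl⟩
    intro i
    rw [hcast, map_smul]
    exact ⟨_, rfl⟩
  · intro hdvd
    choose b hb using hdvd
    refine ⟨∑ i, b i • B i, ?_⟩
    rw [hcast]
    calc x = ∑ i, B.repr x i • B i := (B.sum_repr x).symm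
    _ = ∑ i, ((ℓ:ℤ_[ℓ])^n * b i) • B i := by
        refine Finset.sum_congr rfl fun i _ => by rw [hb i]
    _ = (ℓ:ℤ_[ℓ])^n • ∑ i, b i • B i := by
        rw [Finset.smul_sum]
        refine Finset.sum_congr rfl fun i _ => by rw [mul_smul]

lemma aux_adicComplete (Q : Polynomial ℤ_[ℓ]) (hQm : Q.Monic) :
    IsAdicComplete (Ideal.span {((ℓ : AdjoinRoot Q))}) (AdjoinRoot Q) := by
  set B := (AdjoinRoot.powerBasis' hQm).basis with hB
  have hmem : ∀ (n : ℕ) (x : AdjoinRoot Q),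
      x ∈ (Ideal.span {((ℓ : AdjoinRoot Q))}) ^ n ↔ ∀ i, (ℓ:ℤ_[ℓ])^n ∣ B.repr x i :=
    fun n x => aux_mem_span_iff Q hQm n x
  have hZmem : ∀ (n : ℕ) (a : ℤ_[ℓ]),
      a ∈ (IsLocalRing.maximalIdeal ℤ_[ℓ]) ^ n • (⊤ : Submodule ℤ_[ℓ] ℤ_[ℓ]) ↔ (ℓ:ℤ_[ℓ])^n ∣ a := by
    intro n a
    rw [smul_eq_mul, Ideal.mul_top, PadicInt.maximalIdeal_eq_span_p, Ideal.span_singleton_pow,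
      Ideal.mem_span_singleton]
  have hmem' : ∀ (n : ℕ) (x : AdjoinRoot Q),
      x ∈ (Ideal.span {((ℓ : AdjoinRoot Q))}) ^ n • (⊤ : Submodule (AdjoinRoot Q) (AdjoinRoot Q))
        ↔ ∀ i, (ℓ:ℤ_[ℓ])^n ∣ B.repr x i := by
    intro n x
    rw [smul_eq_mul, Ideal.mul_top]
    exact hmem n x
  refine { toIsHausdorff := ⟨?_⟩, toIsPrecomplete := ⟨?_⟩ }
  · -- Hausdorff
    intro x hx
    have hz : ∀ i, B.repr x i = 0 := by
      intro i
      have hZ : IsHausdorff (IsLocalRing.maximalIdeal ℤ_[ℓ]) ℤ_[ℓ] := inferInstance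
      refine hZ.haus' _ fun n => ?_
      rw [SModEq.zero, hZmem]
      exact ((hmem' n x).mp ((SModEq.zero).mp (hx n))) i
    have := B.sum_repr x
    simp only [hz, zero_smul, Finset.sum_const_zero] at this
    exact this.symm
  · -- Precomplete
    intro f hf
    have hZ : IsPrecomplete (IsLocalRing.maximalIdeal ℤ_[ℓ]) ℤ_[ℓ] := inferInstance
    have key : ∀ i, ∃ L : ℤ_[ℓ], ∀ n, B.repr (f n) i ≡ L
        [SMOD (IsLocalRing.maximalIdeal ℤ_[ℓ]) ^ n • (⊤ : Submodule ℤ_[ℓ] ℤ_[ℓ])] := by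
      intro i
      refine hZ.prec (f := fun n => B.repr (f n) i) ?_
      intro m n hmn
      rw [SModEq.sub_mem, hZmem]
      have := (hmem' m _).mp ((SModEq.sub_mem).mp (hf hmn)) i
      rwa [map_sub, Finsupp.sub_apply] at this
    choose L hL using key
    refine ⟨∑ i, L i • B i, fun n => ?_⟩
    rw [SModEq.sub_mem, hmem']
    intro i
    have h1 := (SModEq.sub_mem.mp (hL i n))
    rw [hZmem] at h1
    have hrepr : B.repr (∑ j, L j • B j) i = L i := by
      simp [Module.Basis.repr_self, Finsupp.single_apply]
    rw [map_sub, Finsupp.sub_apply, hrepr]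
    exact h1

lemma aux_idem_dichotomy {R : Type*} [CommRing R] [IsDomain R] (I : Ideal R)
    [HenselianRing R I] (a₀ : R) (h : a₀^2 - a₀ ∈ I) : a₀ ∈ I ∨ a₀ - 1 ∈ I := by
  have hf : ((X:R[X])^2 - X).Monic := by
    have heq : ((X:R[X])^2 - X) = X * (X - C 1) := by simp [mul_sub]; ring
    rw [heq]
    exact (Polynomial.monic_X).mul (Polynomial.monic_X_sub_C 1)
  have heval : ((X:R[X])^2 - X).eval a₀ ∈ I := by simpa using h
  have hunit : IsUnit (Ideal.Quotient.mk I (((X:R[X])^2 - X).derivative.eval a₀)) := by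
    have hd : ((X:R[X])^2 - X).derivative.eval a₀ = 2*a₀ - 1 := by
      simp; left; exact one_add_one_eq_two
    refine IsUnit.of_mul_eq_one (Ideal.Quotient.mk I (((X:R[X])^2 - X).derivative.eval a₀)) ?_
    rw [hd, ← map_mul, ← map_one (Ideal.Quotient.mk I)]
    rw [Ideal.Quotient.mk_eq_mk_iff_sub_mem]
    have h4 : (2*a₀-1) * (2*a₀-1) - 1 = 4 * (a₀^2 - a₀) := by ring
    rw [h4]
    exact Ideal.mul_mem_left _ _ h
  obtain ⟨a, ha, haa₀⟩ := HenselianRing.is_henselian ((X:R[X])^2 - X) hf a₀ heval hunit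
  have hz : a * (a - 1) = 0 := by
    have h5 := ha
    simp only [Polynomial.IsRoot, Polynomial.eval_sub, Polynomial.eval_pow,
      Polynomial.eval_X] at h5
    calc a * (a-1) = a^2 - a := by ring
    _ = 0 := h5
  rcases mul_eq_zero.mp hz with h0 | h1
  · left
    subst h0
    simpa using (neg_mem_iff.mp (by simpa using haa₀))
  · right
    have ha1 : a = 1 := sub_eq_zero.mp h1
    rw [ha1] at haa₀
    have := neg_mem_iff.mpr haa₀
    simpa [neg_sub] using this

end Aux

/-- Let `P, Q ∈ ℤ_ℓ[X]` be monic coprime polynomials with `P̄` irreducible in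
`𝔽_ℓ[X]` and `Q` irreducible in `ℤ_ℓ[X]`, and write the congruence number
(a constant of lowest valuation in the image of the Sylvester map) as
`c = rP + sQ` with `deg r < deg Q`, `deg s < deg P`; assume `ℓ ∣ c`
(i.e. `‖c‖ < 1`).  Then `s̄` and `Q̄` are coprime in `𝔽_ℓ[X]`. -/
theorem sbar_coprime_Qbar (ℓ : ℕ) [Fact ℓ.Prime]
    (P Q : Polynomial ℤ_[ℓ]) (hPm : P.Monic) (hQm : Q.Monic)
    (hcop : IsCoprime (P.map (algebraMap ℤ_[ℓ] ℚ_[ℓ])) (Q.map (algebraMap ℤ_[ℓ] ℚ_[ℓ])))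
    (hPbar : Irreducible (P.map (PadicInt.toZMod (p := ℓ))))
    (hQirr : Irreducible Q)
    (c : ℤ_[ℓ]) (hc0 : c ≠ 0) (r s : Polynomial ℤ_[ℓ])
    (hr : r.degree < Q.degree) (hs : s.degree < P.degree)
    (hrs : (Polynomial.C c) = r * P + s * Q)
    (hmin : ∀ (c' : ℤ_[ℓ]) (r' s' : Polynomial ℤ_[ℓ]), c' ≠ 0 →
      r'.degree < Q.degree → s'.degree < P.degree →
      (Polynomial.C c') = r' * P + s' * Q → ‖c'‖ ≤ ‖c‖)
    (hdvd : ‖c‖ < 1) :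
    IsCoprime (s.map (PadicInt.toZMod (p := ℓ)))
      (Q.map (PadicInt.toZMod (p := ℓ))) := by
  have hℓprime : ℓ.Prime := Fact.out
  have hℓ0 : (ℓ:ℤ_[ℓ]) ≠ 0 := by
    exact_mod_cast Nat.cast_ne_zero.mpr hℓprime.ne_zero
  set φ := (PadicInt.toZMod (p := ℓ)) with hφ
  -- c is divisible by ℓ
  obtain ⟨c₁, hc₁⟩ : (ℓ:ℤ_[ℓ]) ∣ c := (PadicInt.norm_lt_one_iff_dvd c).mp hdvd
  -- reduction of the Bezout identity
  have h0 : r.map φ * P.map φ + s.map φ * Q.map φ = 0 := by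
    have := congrArg (Polynomial.map φ) hrs
    rw [Polynomial.map_add, Polynomial.map_mul, Polynomial.map_mul, Polynomial.map_C] at this
    have hcc : φ c = 0 := by
      rw [hc₁, map_mul]
      have : φ (ℓ:ℤ_[ℓ]) = 0 := by
        rw [map_natCast]
        exact ZMod.natCast_self ℓ
      rw [this, zero_mul]
    rw [hcc, Polynomial.C_0] at this
    exact this.symm
  have hQbarm : (Q.map φ).Monic := hQm.map φ
  have hPbarm : (P.map φ).Monic := hPm.map φ
  have hQbar0 : Q.map φ ≠ 0 := hQbarm.ne_zero
  have hPbar0 : P.map φ ≠ 0 := hPbarm.ne_zero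
  -- not both r, s reduce to zero
  have hnotboth : ¬(r.map φ = 0 ∧ s.map φ = 0) := by
    rintro ⟨hr0, hs0⟩
    obtain ⟨r₁, hr₁⟩ := aux_C_dvd_of_map_eq_zero r hr0
    obtain ⟨s₁, hs₁⟩ := aux_C_dvd_of_map_eq_zero s hs0
    have hC0 : (Polynomial.C (ℓ:ℤ_[ℓ]) : Polynomial ℤ_[ℓ]) ≠ 0 := by
      simpa using hℓ0
    have hcancel : Polynomial.C c₁ = r₁ * P + s₁ * Q := by
      apply mul_left_cancel₀ hC0
      rw [← Polynomial.C_mul, ← hc₁]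
      rw [hrs, hr₁, hs₁]
      ring
    have hc₁0 : c₁ ≠ 0 := by
      rintro rfl
      rw [mul_zero] at hc₁
      exact hc0 hc₁
    have hdegr : r₁.degree < Q.degree := by
      have : r.degree = r₁.degree := by
        rw [hr₁, Polynomial.degree_mul, Polynomial.degree_C hℓ0, zero_add]
      rwa [this] at hr
    have hdegs : s₁.degree < P.degree := by
      have : s.degree = s₁.degree := by
        rw [hs₁, Polynomial.degree_mul, Polynomial.degree_C hℓ0, zero_add]
      rwa [this] at hs
    have hle := hmin c₁ r₁ s₁ hc₁0 hdegr hdegs hcancel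
    have hnorm : ‖c‖ = (ℓ:ℝ)⁻¹ * ‖c₁‖ := by
      rw [hc₁, norm_mul, PadicInt.norm_p]
    have hc₁pos : 0 < ‖c₁‖ := norm_pos_iff.mpr hc₁0
    have hℓ1 : (1:ℝ) < (ℓ:ℝ) := by exact_mod_cast hℓprime.one_lt
    have : ‖c‖ < ‖c₁‖ := by
      rw [hnorm]
      calc (ℓ:ℝ)⁻¹ * ‖c₁‖ < 1 * ‖c₁‖ := by
            apply mul_lt_mul_of_pos_right _ hc₁pos
            rw [inv_lt_one_iff₀]
            right; exact hℓ1
      _ = ‖c₁‖ := one_mul _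
    linarith
  -- s̄ ≠ 0
  have hsbar0 : s.map φ ≠ 0 := by
    intro hs0
    apply hnotboth
    refine ⟨?_, hs0⟩
    rw [hs0, zero_mul, add_zero] at h0
    rcases mul_eq_zero.mp h0 with h | h
    · exact h
    · exact absurd h hPbar0
  -- degree of s̄ is less than degree of P̄
  have hdegs : (s.map φ).degree < (P.map φ).degree := by
    calc (s.map φ).degree ≤ s.degree := Polynomial.degree_map_le
    _ < P.degree := hs
    _ = (P.map φ).degree := (hPm.degree_map φ).symm
  -- P̄ does not divide s̄
  have hPnds : ¬ (P.map φ ∣ s.map φ) := by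
    intro hdvd'
    exact absurd (Polynomial.degree_le_of_dvd hdvd' hsbar0) (not_le.mpr hdegs)
  -- P̄ is prime
  have hPprime : Prime (P.map φ) := hPbar.prime
  -- P̄ divides Q̄
  have hPdQ : P.map φ ∣ Q.map φ := by
    have : P.map φ ∣ s.map φ * Q.map φ := by
      refine ⟨-(r.map φ), ?_⟩
      have : s.map φ * Q.map φ = -(r.map φ * P.map φ) := by
        rw [eq_neg_iff_add_eq_zero, add_comm]
        exact h0
      rw [this]; ring
    rcases hPprime.dvd_mul.mp this with h | h
    · exact absurd h hPnds
    · exact h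
  -- main contradiction machine
  refine isCoprime_of_irreducible_dvd (fun ⟨h1, _⟩ => hsbar0 h1) ?_
  intro d hd hds hdQ
  -- d does not divide P̄
  have hdnP : ¬ d ∣ P.map φ := by
    intro hdvd'
    have hassoc := hd.associated_of_dvd hPbar hdvd'
    exact hPnds (dvd_trans hassoc.symm.dvd hds)
  -- extract the maximal power of P̄ from Q̄
  obtain ⟨n, b, hb, hQeq⟩ := WfDvdMonoid.max_power_factor hQbar0 hPbar
  have hn : n ≠ 0 := by
    rintro rfl
    rw [pow_zero, one_mul] at hQeq
    rw [hQeq] at hPdQ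
    exact hb hPdQ
  have hdprime : Prime d := hd.prime
  have hdb : d ∣ b := by
    have : d ∣ (P.map φ)^n * b := hQeq ▸ hdQ
    rcases hdprime.dvd_mul.mp this with h | h
    · exact absurd (hdprime.dvd_of_dvd_pow h) hdnP
    · exact h
  have hcopnb : IsCoprime ((P.map φ)^n) b :=
    (hPbar.coprime_iff_not_dvd.mpr hb).pow_left
  obtain ⟨u, v, huv⟩ := hcopnb
  -- lift v * b and -(u * v) to ℤ_ℓ[X]
  have hmapsurj : Function.Surjective (Polynomial.map φ) :=
    Polynomial.map_surjective φ aux_toZMod_surjective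
  obtain ⟨W, hW⟩ := hmapsurj (v * b)
  obtain ⟨M, hM⟩ := hmapsurj (-(u * v))
  -- W^2 - W - M * Q reduces to 0 mod ℓ
  obtain ⟨K, hK⟩ : Polynomial.C ((ℓ:ℤ_[ℓ])) ∣ (W^2 - W - M * Q) := by
    apply aux_C_dvd_of_map_eq_zero
    have hQmap : (Q.map φ) = (P.map φ)^n * b := hQeq
    rw [Polynomial.map_sub, Polynomial.map_sub, Polynomial.map_pow, Polynomial.map_mul, hW, hM,
      hQmap]
    have : (v * b)^2 - v * b = -(u * v) * ((P.map φ)^n * b) := by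
      have h1 : v * b - 1 = -(u * (P.map φ)^n) := by
        rw [← huv]; ring
      calc (v * b)^2 - v * b = (v * b) * (v * b - 1) := by ring
      _ = (v * b) * (-(u * (P.map φ)^n)) := by rw [h1]
      _ = -(u * v) * ((P.map φ)^n * b) := by ring
    rw [← this]
    ring
  -- set up the Hensel machinery on AdjoinRoot Q
  have hQ0 : Q ≠ 0 := hQm.ne_zero
  have hQprime : Prime Q := UniqueFactorizationMonoid.irreducible_iff_prime.mp hQirr
  haveI hdom : IsDomain (AdjoinRoot Q) := by
    have hsp : (Ideal.span {Q} : Ideal (Polynomial ℤ_[ℓ])).IsPrime :=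
      (Ideal.span_singleton_prime hQ0).mpr hQprime
    exact Ideal.Quotient.isDomain _
  haveI := aux_adicComplete Q hQm
  haveI hhens : HenselianRing (AdjoinRoot Q) (Ideal.span {((ℓ : AdjoinRoot Q))}) :=
    inferInstance
  set I : Ideal (AdjoinRoot Q) := Ideal.span {((ℓ : AdjoinRoot Q))} with hI
  set a₀ : AdjoinRoot Q := AdjoinRoot.mk Q W with ha₀
  have hℓR : ((ℓ : AdjoinRoot Q)) = AdjoinRoot.mk Q (Polynomial.C (ℓ:ℤ_[ℓ])) := by
    simp
  have hmem : a₀^2 - a₀ ∈ I := by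
    have : a₀^2 - a₀ = AdjoinRoot.mk Q (W^2 - W) := by
      rw [ha₀, map_sub, map_pow]
    rw [this]
    have h2 : (W^2 - W : Polynomial ℤ_[ℓ]) = M * Q + Polynomial.C (ℓ:ℤ_[ℓ]) * K := by
      rw [← hK]; ring
    rw [h2, map_add, map_mul, AdjoinRoot.mk_self, mul_zero, zero_add, map_mul]
    rw [Ideal.mem_span_singleton, hℓR]
    exact ⟨_, rfl⟩
  -- helper: from Q dividing a lift, deduce Q̄ divides the reduction
  have hreduce : ∀ T : Polynomial ℤ_[ℓ], Q ∣ T → (Q.map φ) ∣ T.map φ := by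
    intro T ⟨g, hg⟩
    exact ⟨g.map φ, by rw [hg, Polynomial.map_mul]⟩
  rcases aux_idem_dichotomy I a₀ hmem with hcase | hcase
  · -- a₀ ∈ I : then Q̄ ∣ v*b, contradiction via P̄ unit
    rw [Ideal.mem_span_singleton] at hcase
    obtain ⟨y, hy⟩ := hcase
    obtain ⟨Y, rfl⟩ := AdjoinRoot.mk_surjective y
    have hzero : AdjoinRoot.mk Q (W - Polynomial.C (ℓ:ℤ_[ℓ]) * Y) = 0 := by
      rw [map_sub, map_mul, ← hℓR, ← hy, ha₀, sub_self]
    rw [AdjoinRoot.mk_eq_zero] at hzero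
    have hdd := hreduce _ hzero
    have hmapzero : (Polynomial.C (ℓ:ℤ_[ℓ]) * Y).map φ = 0 := by
      rw [Polynomial.map_mul, Polynomial.map_C]
      have : φ (ℓ:ℤ_[ℓ]) = 0 := by
        rw [map_natCast]; exact ZMod.natCast_self ℓ
      rw [this, Polynomial.C_0, zero_mul]
    rw [Polynomial.map_sub, hmapzero, sub_zero, hW] at hdd
    -- P̄ ∣ v * b and P̄ ∣ u * P̄^n so P̄ ∣ 1
    have hP1 : (P.map φ) ∣ 1 := by
      rw [← huv]
      apply dvd_add
      · exact Dvd.dvd.mul_left (dvd_pow_self _ hn) u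
      · exact dvd_trans hPdQ hdd
    exact hPbar.not_isUnit (isUnit_of_dvd_one hP1)
  · -- a₀ - 1 ∈ I : then Q̄ ∣ v*b - 1, contradiction via d unit
    rw [Ideal.mem_span_singleton] at hcase
    obtain ⟨y, hy⟩ := hcase
    obtain ⟨Y, rfl⟩ := AdjoinRoot.mk_surjective y
    have hzero : AdjoinRoot.mk Q (W - 1 - Polynomial.C (ℓ:ℤ_[ℓ]) * Y) = 0 := by
      rw [map_sub, map_sub, map_mul, ← hℓR, ← hy, ha₀, map_one]
      ring
    rw [AdjoinRoot.mk_eq_zero] at hzero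
    have hdd := hreduce _ hzero
    have hmapzero : (Polynomial.C (ℓ:ℤ_[ℓ]) * Y).map φ = 0 := by
      rw [Polynomial.map_mul, Polynomial.map_C]
      have : φ (ℓ:ℤ_[ℓ]) = 0 := by
        rw [map_natCast]; exact ZMod.natCast_self ℓ
      rw [this, Polynomial.C_0, zero_mul]
    rw [Polynomial.map_sub, Polynomial.map_sub, hmapzero, sub_zero, hW,
      Polynomial.map_one] at hdd
    -- d ∣ v*b - 1 and d ∣ v*b, so d ∣ 1
    have hd1 : d ∣ 1 := by
      have h1 : d ∣ v * b := Dvd.dvd.mul_left hdb v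
      have h2 : d ∣ v * b - 1 := dvd_trans hdQ hdd
      have : (1 : Polynomial (ZMod ℓ)) = v * b - (v * b - 1) := by ring
      rw [this]
      exact dvd_sub h1 h2
    exact hd.not_isUnit (isUnit_of_dvd_one hd1)
end

section
/- Let d ≥ 1 and let T be a d×d matrix over a commutative ring R with characteristic polynomial Σ_{i=0}^{d} c_i X^i. Fix δ ∈ R and r ≥ 1. Then the characteristic polynomial of the d(r+1) × d(r+1) block companion-type matrix (with blocks T, identities 1_d on the first superdiagonal, -δ·1_d in position (2,1), and zeros elsewhere as in the degeneracy-map matrix) equals Σ_{i=0}^{d} c_i X^{dr-i} (X² + δ)^i. -/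
open Polynomial

section AuxDegeneracy

open Matrix

lemma aux_blocks' {R : Type*} [CommRing R] {m : Type*} [Fintype m] [DecidableEq m]
    (a b c d a' b' c' d' : Matrix m m R) (h1 : a = a') (h2 : b = b') (h3 : c = c')
    (h4 : d = d') : Matrix.fromBlocks a b c d = Matrix.fromBlocks a' b' c' d' := by
  rw [h1, h2, h3, h4]

lemma det_fromBlocks_neg_one' {R : Type*} [CommRing R] {m : Type*} [Fintype m] [DecidableEq m]
    (A C D : Matrix m m R) :
    (Matrix.fromBlocks A (-1) C D).det = (C + D * A).det := by
  have hN : (Matrix.fromBlocks (0 : Matrix m m R) 1 (-1) A).det = 1 := by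
    have h1 : (Matrix.fromBlocks (0 : Matrix m m R) 1 (-1) A) *
        Matrix.fromBlocks 1 0 1 1 * Matrix.fromBlocks 1 (-1) 0 1 =
        Matrix.fromBlocks 1 0 (A - 1) 1 := by
      rw [Matrix.fromBlocks_multiply, Matrix.fromBlocks_multiply]
      apply aux_blocks' <;>
        simp only [Matrix.zero_mul, Matrix.mul_zero, Matrix.one_mul, Matrix.mul_one,
          Matrix.neg_mul, Matrix.mul_neg, add_zero, zero_add, neg_neg, neg_zero, neg_add_cancel,
          add_neg_cancel] <;> abel
    have h2 := congrArg Matrix.det h1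
    rw [Matrix.det_mul, Matrix.det_mul, Matrix.det_fromBlocks_zero₂₁,
      Matrix.det_fromBlocks_zero₁₂, Matrix.det_fromBlocks_zero₁₂] at h2
    simpa using h2
  have h2 : (Matrix.fromBlocks A (-1) C D) * Matrix.fromBlocks (0 : Matrix m m R) 1 (-1) A =
      Matrix.fromBlocks 1 0 (-D) (C + D * A) := by
    rw [Matrix.fromBlocks_multiply]
    apply aux_blocks' <;>
      simp only [Matrix.zero_mul, Matrix.mul_zero, Matrix.one_mul, Matrix.mul_one,
        Matrix.neg_mul, Matrix.mul_neg, add_zero, zero_add, neg_neg, neg_zero, neg_add_cancel,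
        add_neg_cancel] <;> abel
  have h3 := congrArg Matrix.det h2
  rw [Matrix.det_mul, hN, mul_one, Matrix.det_fromBlocks_zero₁₂, Matrix.det_one, one_mul] at h3
  exact h3

lemma eval₂_charpoly' {R S : Type*} [CommRing R] [CommRing S] {m : Type*} [Fintype m]
    [DecidableEq m] (M : Matrix m m R) (f : R →+* S) (u : S) :
    (M.charpoly).eval₂ f u = (u • (1 : Matrix m m S) - M.map f).det := by
  rw [Matrix.charpoly, ← Polynomial.coe_eval₂RingHom, RingHom.map_det]
  congr 1
  ext i j
  by_cases h : i = j
  · subst h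
    simp [Matrix.charmatrix_apply_eq, Matrix.one_apply, smul_eq_mul]
  · simp [Matrix.charmatrix_apply_ne _ _ _ h, Matrix.one_apply, h, smul_eq_mul]

lemma key_homog' {R : Type*} [CommRing R] (d : ℕ) (M : Matrix (Fin d) (Fin d) R) (δ : R) :
    ((X ^ 2 + Polynomial.C δ) • (1 : Matrix (Fin d) (Fin d) R[X])
        - (X : R[X]) • M.map Polynomial.C).det
      = ∑ i ∈ Finset.range (d + 1),
          Polynomial.C (M.charpoly.coeff i) * X ^ (d - i) * (X ^ 2 + Polynomial.C δ) ^ i := by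
  nontriviality R
  apply Polynomial.toLaurent_injective
  set t : (LaurentPolynomial R) := LaurentPolynomial.T 1 with ht_def
  have htt : t * LaurentPolynomial.T (-1) = 1 := by
    rw [ht_def, ← LaurentPolynomial.T_add]; norm_num
  set u : (LaurentPolynomial R) := t + LaurentPolynomial.C δ * LaurentPolynomial.T (-1)
    with hu_def
  have htu : t * u = t ^ 2 + LaurentPolynomial.C δ := by
    rw [hu_def, mul_add, sq, mul_comm (LaurentPolynomial.C δ) (LaurentPolynomial.T (-1)),
      ← mul_assoc, htt, one_mul]
  have hL : Polynomial.toLaurent (((X ^ 2 + Polynomial.C δ) • (1 : Matrix (Fin d) (Fin d) R[X])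
      - (X : R[X]) • M.map Polynomial.C).det)
      = ((t ^ 2 + LaurentPolynomial.C δ) • (1 : Matrix (Fin d) (Fin d) (LaurentPolynomial R))
          - t • M.map LaurentPolynomial.C).det := by
    rw [← Polynomial.coe_toLaurentAlg, AlgHom.map_det]
    congr 1
    ext i j
    by_cases h : i = j
    · subst h
      simp only [AlgHom.mapMatrix_apply, Matrix.map_apply, Matrix.sub_apply, Matrix.smul_apply,
        Matrix.one_apply_eq, smul_eq_mul, mul_one, map_sub, _root_.map_mul, _root_.map_add,
        map_pow, Polynomial.coe_toLaurentAlg, Polynomial.toLaurent_C, Polynomial.toLaurent_X,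
        ht_def]
    · simp only [AlgHom.mapMatrix_apply, Matrix.map_apply, Matrix.sub_apply, Matrix.smul_apply,
        Matrix.one_apply_ne h, smul_eq_mul, mul_zero, zero_sub, map_neg, _root_.map_mul,
        Polynomial.coe_toLaurentAlg, Polynomial.toLaurent_C, Polynomial.toLaurent_X, ht_def]
  rw [hL]
  have hfactor : ((t ^ 2 + LaurentPolynomial.C δ) • (1 : Matrix (Fin d) (Fin d)
      (LaurentPolynomial R)) - t • M.map LaurentPolynomial.C)
      = t • (u • (1 : Matrix (Fin d) (Fin d) (LaurentPolynomial R))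
          - M.map LaurentPolynomial.C) := by
    rw [smul_sub, smul_smul, htu]
  rw [hfactor, Matrix.det_smul, ← eval₂_charpoly']
  have hdeg : M.charpoly.natDegree < d + 1 := by
    rw [Matrix.charpoly_natDegree_eq_dim]; simp
  have hsum := Polynomial.eval₂_eq_sum_range' (LaurentPolynomial.C (R := R)) hdeg u
  rw [hsum, Finset.mul_sum, map_sum]
  refine Finset.sum_congr rfl fun i hi => ?_
  rw [Finset.mem_range] at hi
  have hi' : i ≤ d := Nat.lt_succ_iff.mp hi
  rw [_root_.map_mul, _root_.map_mul, map_pow, map_pow, _root_.map_add, map_pow,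
    Polynomial.toLaurent_C, Polynomial.toLaurent_C, Polynomial.toLaurent_X, ← ht_def]
  have hsplit : (t : (LaurentPolynomial R)) ^ d = t ^ (d - i) * t ^ i := by
    rw [← pow_add, Nat.sub_add_cancel hi']
  rw [Fintype.card_fin, hsplit]
  calc t ^ (d - i) * t ^ i * (LaurentPolynomial.C (M.charpoly.coeff i) * u ^ i)
      = LaurentPolynomial.C (M.charpoly.coeff i) * (t ^ (d - i) * (t * u) ^ i) := by
        rw [mul_pow]; ring
    _ = LaurentPolynomial.C (M.charpoly.coeff i) * t ^ (d - i)
          * (t ^ 2 + LaurentPolynomial.C δ) ^ i := by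
        rw [htu]; ring

/-- The degeneracy block matrix. -/
def degMat (R : Type) [CommRing R] (d r : ℕ) (T : Matrix (Fin d) (Fin d) R) (δ : R) :
    Matrix (Fin (r + 1) × Fin d) (Fin (r + 1) × Fin d) R :=
  Matrix.of (fun p q : Fin (r + 1) × Fin d =>
      if (p.1 : ℕ) = 0 ∧ (q.1 : ℕ) = 0 then T p.2 q.2
      else if (q.1 : ℕ) = (p.1 : ℕ) + 1 then (if p.2 = q.2 then (1 : R) else 0)
      else if (p.1 : ℕ) = 1 ∧ (q.1 : ℕ) = 0 then (if p.2 = q.2 then -δ else 0)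
      else 0)

def esplit (d r : ℕ) : Fin (r + 2) × Fin d ≃ (Fin (r + 1) × Fin d) ⊕ Fin d where
  toFun p := if h : (p.1 : ℕ) < r + 1 then Sum.inl (⟨⟨p.1, h⟩, p.2⟩) else Sum.inr p.2
  invFun q := q.elim (fun a => (a.1.castSucc, a.2)) (fun x => (Fin.last (r + 1), x))
  left_inv := by
    rintro ⟨p1, p2⟩
    by_cases h : (p1 : ℕ) < r + 1
    · simp [dif_pos h, Prod.ext_iff, Fin.ext_iff, Nat.lt_succ_iff.mp h]
    · have h1 : (p1 : ℕ) = r + 1 := by omega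
      simp [dif_neg h, Prod.ext_iff, Fin.ext_iff, h1]
  right_inv := by
    rintro (a | x)
    · have h : ((a.1.castSucc : Fin (r + 2)) : ℕ) < r + 1 := by simpa using a.1.isLt
      simp only [Sum.elim_inl, dif_pos h, Sum.inl.injEq]
      simp [Prod.ext_iff, Fin.ext_iff, Nat.lt_succ_iff.mp a.1.isLt]
    · have h : ¬ (((Fin.last (r + 1) : Fin (r + 2)) : ℕ) < r + 1) := by simp
      simp only [Sum.elim_inr]; exact dif_neg h

def e2 (d : ℕ) : Fin 2 × Fin d ≃ Fin d ⊕ Fin d where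
  toFun p := if (p.1 : ℕ) = 0 then Sum.inl p.2 else Sum.inr p.2
  invFun q := q.elim (fun x => (0, x)) (fun x => (1, x))
  left_inv := by rintro ⟨p1, p2⟩; fin_cases p1 <;> simp
  right_inv := by rintro (x | x) <;> simp

variable {R : Type} [CommRing R] {d : ℕ}

lemma charpoly_zero_mat : (0 : Matrix (Fin d) (Fin d) R).charpoly = X ^ d := by
  rw [Matrix.charpoly, Matrix.charmatrix]
  simp only [map_zero, sub_zero]
  rw [show Matrix.scalar (Fin d) (X : R[X]) = Matrix.diagonal (fun _ => X) from rfl,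
    Matrix.det_diagonal]
  simp

lemma degMat_step (d r : ℕ) (hr : 1 ≤ r) (T : Matrix (Fin d) (Fin d) R) (δ : R) :
    (degMat R d (r + 1) T δ).charpoly = (degMat R d r T δ).charpoly * X ^ d := by
  have hre : (Matrix.reindex (esplit d r) (esplit d r) (degMat R d (r + 1) T δ))
      = Matrix.fromBlocks (degMat R d r T δ)
          (Matrix.of fun (a : Fin (r + 1) × Fin d) (x : Fin d) =>
            degMat R d (r + 1) T δ (a.1.castSucc, a.2) (Fin.last (r + 1), x))
          0 0 := by
    ext i j
    rcases i with a | x <;> rcases j with b | y <;>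
      simp only [Matrix.reindex_apply, Matrix.submatrix_apply, esplit, Equiv.coe_fn_symm_mk,
        Sum.elim_inl, Sum.elim_inr, Matrix.fromBlocks_apply₁₁, Matrix.fromBlocks_apply₁₂,
        Matrix.fromBlocks_apply₂₁, Matrix.fromBlocks_apply₂₂, Matrix.of_apply,
        Matrix.zero_apply, degMat, Fin.coe_castSucc, Fin.val_last] <;>
      try rfl
    · have hb : (b.1 : ℕ) ≤ r := Nat.lt_succ_iff.mp b.1.isLt
      rw [if_neg (by omega), if_neg (by omega), if_neg (by omega)]
    · rw [if_neg (by omega), if_neg (by omega), if_neg (by omega)]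
  have h1 := Matrix.charpoly_reindex (esplit d r) (degMat R d (r + 1) T δ)
  rw [← h1, hre, Matrix.charpoly_fromBlocks_zero₂₁, charpoly_zero_mat]

lemma degMat_base (d : ℕ) (T : Matrix (Fin d) (Fin d) R) (δ : R) :
    (degMat R d 1 T δ).charpoly
      = ∑ i ∈ Finset.range (d + 1),
          Polynomial.C (T.charpoly.coeff i) * X ^ (d - i) * (X ^ 2 + Polynomial.C δ) ^ i := by
  have hre : (Matrix.reindex (e2 d) (e2 d) (degMat R d 1 T δ))
      = Matrix.fromBlocks T 1 (Matrix.diagonal fun _ => -δ) 0 := by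
    ext i j
    rcases i with x | x <;> rcases j with y | y <;>
      simp [e2, degMat, Matrix.one_apply, Matrix.diagonal_apply]
  have hdet : (Matrix.fromBlocks T 1 (Matrix.diagonal fun _ => -δ) 0).charpoly
      = ((X ^ 2 + Polynomial.C δ) • (1 : Matrix (Fin d) (Fin d) R[X])
          - (X : R[X]) • T.map Polynomial.C).det := by
    rw [Matrix.charpoly, Matrix.charmatrix_fromBlocks]
    have h1 : -((1 : Matrix (Fin d) (Fin d) R).map Polynomial.C) =
        (-1 : Matrix (Fin d) (Fin d) R[X]) := by
      rw [Matrix.map_one _ (map_zero _) (map_one _)]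
    have h2 : -((Matrix.diagonal fun _ : Fin d => -δ).map Polynomial.C) =
        Matrix.diagonal (fun _ : Fin d => Polynomial.C δ) := by
      rw [Matrix.diagonal_map (map_zero _)]
      ext i j
      by_cases h : i = j <;> simp [h, Matrix.diagonal_apply]
    have h3 : Matrix.charmatrix (0 : Matrix (Fin d) (Fin d) R) =
        Matrix.scalar (Fin d) (X : R[X]) := by
      rw [Matrix.charmatrix]; simp
    rw [h1, h2, h3, det_fromBlocks_neg_one']
    congr 1
    rw [Matrix.scalar_apply, ← Matrix.smul_eq_diagonal_mul, ← Matrix.smul_one_eq_diagonal,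
      Matrix.charmatrix, RingHom.mapMatrix_apply, Matrix.scalar_apply,
      ← Matrix.smul_one_eq_diagonal, smul_sub, smul_smul, ← sq, add_smul]
    abel
  rw [← Matrix.charpoly_reindex (e2 d) (degMat R d 1 T δ), hre, hdet, key_homog']

lemma degMat_charpoly (d : ℕ) (T : Matrix (Fin d) (Fin d) R) (δ : R) :
    ∀ r : ℕ, 1 ≤ r → (degMat R d r T δ).charpoly
      = ∑ i ∈ Finset.range (d + 1),
          Polynomial.C (T.charpoly.coeff i) * X ^ (d * r - i) *
            (X ^ 2 + Polynomial.C δ) ^ i := by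
  intro r hr
  induction r, hr using Nat.le_induction with
  | base => simpa [mul_one] using degMat_base d T δ
  | succ r hr ih =>
    rw [degMat_step d r hr T δ, ih, Finset.sum_mul]
    refine Finset.sum_congr rfl fun i hi => ?_
    rw [Finset.mem_range] at hi
    have hi' : i ≤ d := Nat.lt_succ_iff.mp hi
    have hd' : d ≤ d * r := Nat.le_mul_of_pos_right d hr
    have hmul : d * (r + 1) = d * r + d := Nat.mul_succ d r
    rw [show d * (r + 1) - i = (d * r - i) + d by omega, pow_add]
    ring

end AuxDegeneracy

/-- Let `T` be a `d×d` matrix over a commutative ring `R` with characteristic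
polynomial `Σ_{i=0}^d c_i X^i`, let `δ ∈ R` and `r ≥ 1`.  The characteristic
polynomial of the `d(r+1) × d(r+1)` block matrix with `(1,1)`-block `T`,
identity blocks `1_d` on the first block-superdiagonal, `-δ·1_d` in block
position `(2,1)` and zeros elsewhere (the degeneracy-map matrix of the Hecke
operator on the old space) equals `Σ_{i=0}^d c_i X^{dr-i} (X² + δ)^i`. -/
theorem charpoly_degeneracy_block_matrix (R : Type) [CommRing R]
    (d r : ℕ) (hd : 1 ≤ d) (hr : 1 ≤ r)
    (T : Matrix (Fin d) (Fin d) R) (δ : R) :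
    (Matrix.of (fun p q : Fin (r + 1) × Fin d =>
      if (p.1 : ℕ) = 0 ∧ (q.1 : ℕ) = 0 then T p.2 q.2
      else if (q.1 : ℕ) = (p.1 : ℕ) + 1 then (if p.2 = q.2 then (1 : R) else 0)
      else if (p.1 : ℕ) = 1 ∧ (q.1 : ℕ) = 0 then (if p.2 = q.2 then -δ else 0)
      else 0)).charpoly
      = ∑ i ∈ Finset.range (d + 1),
          Polynomial.C (T.charpoly.coeff i) * X ^ (d * r - i) *
            (X ^ 2 + Polynomial.C δ) ^ i := by
  exact degMat_charpoly d T δ r hr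
end

section
/- Let T be a d×d matrix over an algebraically closed field with eigenvalues a₁,…,a_d, and δ a scalar. Then the characteristic polynomial of the 2d×2d block matrix [[T, 1_d],[-δ·1_d, 0_d]] equals Π_{j=1}^{d} (X² - a_j X + δ). -/
open Polynomial

set_option maxHeartbeats 1000000

open Matrix in

/-- Let `T` be a `d×d` matrix over an algebraically closed field with
eigenvalues `a₁, …, a_d` (counted with multiplicity, i.e.
`charpoly T = Π_j (X - a_j)`) and let `δ` be a scalar.  Then the
characteristic polynomial of the `2d×2d` block matrix `[[T, 1],[-δ·1, 0]]`
equals `Π_{j=1}^d (X² - a_j X + δ)`. -/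
theorem charpoly_two_by_two_block (F : Type) [Field F] [IsAlgClosed F]
    (d : ℕ) (T : Matrix (Fin d) (Fin d) F) (δ : F) (a : Fin d → F)
    (ha : T.charpoly = ∏ j, (X - Polynomial.C (a j))) :
    (Matrix.fromBlocks T (1 : Matrix (Fin d) (Fin d) F)
        (-(δ • (1 : Matrix (Fin d) (Fin d) F))) (0 : Matrix (Fin d) (Fin d) F)).charpoly
      = ∏ j, (X ^ 2 - Polynomial.C (a j) * X + Polynomial.C δ) := by
  classical
  set K := FractionRing (Polynomial F)
  set φ : Polynomial F →+* K := (algebraMap (Polynomial F) K : Polynomial F →+* K) with hφ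
  have hinj : Function.Injective φ := IsFractionRing.injective _ _
  apply hinj
  set ψ : F →+* K := φ.comp (Polynomial.C) with hψ
  set x : K := φ X with hx
  have hx0 : x ≠ 0 := by
    simp only [hx, Ne, map_eq_zero_iff φ hinj]
    exact X_ne_zero
  set T' : Matrix (Fin d) (Fin d) K := T.map ψ with hT'
  have key : ∀ (M : Matrix (Fin d) (Fin d) K) (r : K),
      (M.charpoly).eval r = (r • (1 : Matrix (Fin d) (Fin d) K) - M).det := by
    intro M r
    rw [Matrix.charpoly, ← coe_evalRingHom, RingHom.map_det]
    congr 1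
    ext i j
    by_cases h : i = j <;>
      simp [charmatrix_apply, h, Matrix.one_apply, Matrix.smul_apply]
  rw [Matrix.charpoly, RingHom.map_det, RingHom.mapMatrix_apply, charmatrix_fromBlocks]
  have hmap : (Matrix.fromBlocks (charmatrix T) (-(1 : Matrix (Fin d) (Fin d) F).map Polynomial.C)
      (-(-(δ • (1 : Matrix (Fin d) (Fin d) F))).map Polynomial.C)
      (charmatrix (0 : Matrix (Fin d) (Fin d) F))).map φ =
      Matrix.fromBlocks ((charmatrix T).map φ) (-1) ((ψ δ) • 1)
        (x • (1 : Matrix (Fin d) (Fin d) K)) := by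
    ext (i|i) (j|j) <;> [skip; simp; simp; skip] <;> by_cases h : i = j <;>
      simp [charmatrix_apply, Matrix.one_apply, h, hψ, hx]
  rw [hmap]
  have hmul : (x • (1 : Matrix (Fin d) (Fin d) K)) * (x⁻¹ • 1) = 1 := by
    rw [smul_mul_assoc, Matrix.one_mul, smul_smul, mul_inv_cancel₀ hx0, one_smul]
  have hmul' : (x⁻¹ • (1 : Matrix (Fin d) (Fin d) K)) * (x • 1) = 1 := by
    rw [smul_mul_assoc, Matrix.one_mul, smul_smul, inv_mul_cancel₀ hx0, one_smul]
  haveI : Invertible (x • (1 : Matrix (Fin d) (Fin d) K)) := ⟨x⁻¹ • 1, hmul', hmul⟩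
  rw [Matrix.det_fromBlocks₂₂]
  rw [invOf_eq_right_inv hmul]
  have hcm : (charmatrix T).map φ = x • (1 : Matrix (Fin d) (Fin d) K) - T' := by
    ext i j
    by_cases h : i = j <;> simp [charmatrix_apply, h, Matrix.one_apply, hT', hψ, hx]
  have hAB : (charmatrix T).map φ - (-1) * (x⁻¹ • 1) * ((ψ δ) • 1) =
      (x + x⁻¹ * ψ δ) • (1 : Matrix (Fin d) (Fin d) K) - T' := by
    rw [hcm, add_smul]
    simp [smul_smul, mul_comm]
    abel
  rw [hAB, ← key, Matrix.det_smul, det_one, mul_one]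
  have hcp : T'.charpoly = ∏ j, (X - Polynomial.C (ψ (a j))) := by
    rw [hT', Matrix.charpoly_map, ha, Polynomial.map_prod]
    simp
  rw [hcp, eval_prod, map_prod, Fintype.card_fin]
  have hxd : (x : K) ^ d = ∏ _j : Fin d, x := by simp
  rw [hxd, ← Finset.prod_mul_distrib]
  refine Finset.prod_congr rfl fun j _ => ?_
  have hrhs : φ (X ^ 2 - Polynomial.C (a j) * X + Polynomial.C δ)
      = x ^ 2 - ψ (a j) * x + ψ δ := by
    simp [hψ, hx]
  rw [hrhs, eval_sub, eval_X, eval_C]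
  rw [mul_sub, mul_add, ← mul_assoc, mul_inv_cancel₀ hx0, one_mul]
  ring
end
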